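/- Let k be an algebraically closed field and let Y be a reduced scheme of finite type over k (the structure morphism f : Y → Spec k is quasi-compact and locally of finite type). If f is topologically unramified, i.e. the diagonal morphism Y → Y ×_{Spec k} Y is an open map on underlying topological spaces, then f is étale. -/

import Mathlib

universe u

open AlgebraicGeometry CategoryTheory CategoryTheory.Limits

/-- A morphism of schemes `f : Y ⟶ X` is topologically unramified if its diagonal morphism
`Y ⟶ Y ×ₓ Y` is an open map on underlying topological spaces. -/
def TopologicallyUnramified {Y X : AlgebraicGeometry.Scheme} (f : Y ⟶ X) : Prop :=
  IsOpenMap (pullback.diagonal f).base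

section Aux

namespace TopUnramifiedAux

open AlgebraicGeometry

/-- If `f : Y ⟶ S` has a section `σ` with `S` having a subsingleton underlying space, and the
diagonal of `f` is an open map, then the image point of `σ` is open in `Y`. -/
lemma isOpen_singleton_of_section {Y S : AlgebraicGeometry.Scheme.{u}} (f : Y ⟶ S) (σ : S ⟶ Y)
    (hσ : σ ≫ f = 𝟙 S) (hf : IsOpenMap (pullback.diagonal f).base)
    (hS : ∀ a b : S, a = b) (t : S) :
    IsOpen ({σ.base t} : Set Y) := by
  have hcond : 𝟙 Y ≫ f = (f ≫ σ) ≫ f := by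
    rw [Category.id_comp, Category.assoc, hσ, Category.comp_id]
  set i : Y ⟶ pullback f f := pullback.lift (𝟙 Y) (f ≫ σ) hcond with hi
  have hO : IsOpen (Set.range (pullback.diagonal f).base) := by
    have := hf Set.univ isOpen_univ
    rwa [Set.image_univ] at this
  have key : i.base ⁻¹' (Set.range (pullback.diagonal f).base) = {σ.base t} := by
    ext z
    simp only [Set.mem_preimage, Set.mem_range, Set.mem_singleton_iff]
    constructor
    · rintro ⟨w, hw⟩
      have hz : (pullback.fst f f).base (i.base z) = z := by
        rw [← Scheme.Hom.comp_apply, hi, pullback.lift_fst]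
        rfl
      have hw1 : (pullback.fst f f).base ((pullback.diagonal f).base w) = w := by
        rw [← Scheme.Hom.comp_apply, pullback.diagonal_fst]
        rfl
      have hzw : w = z := by rw [← hw1, hw, hz]
      have hsnd : (pullback.snd f f).base (i.base z) = σ.base (f.base z) := by
        rw [← Scheme.Hom.comp_apply, hi, pullback.lift_snd]
        exact Scheme.Hom.comp_apply f σ z
      have hsnd' : (pullback.snd f f).base ((pullback.diagonal f).base w) = w := by
        rw [← Scheme.Hom.comp_apply, pullback.diagonal_snd]
        rfl
      have : σ.base (f.base z) = z := by
        rw [← hsnd, ← hw, hsnd', hzw]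
      rw [← this, hS (f.base z) t]
    · rintro rfl
      have hcomm : σ ≫ i = σ ≫ pullback.diagonal f := by
        apply pullback.hom_ext
        · rw [Category.assoc, Category.assoc, pullback.lift_fst, pullback.diagonal_fst]
        · rw [Category.assoc, Category.assoc, pullback.lift_snd, pullback.diagonal_snd,
            Category.comp_id, ← Category.assoc, hσ, Category.id_comp]
      refine ⟨σ.base t, ?_⟩
      have := congrArg (fun g : S ⟶ pullback f f => g.base t) hcomm
      simp only [Scheme.Hom.comp_apply] at this
      exact this.symm
  rw [← key]
  exact (Scheme.Hom.continuous i).isOpen_preimage _ hO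

variable {k : Type u} [Field k] [IsAlgClosed k]
variable {Y : AlgebraicGeometry.Scheme.{u}} (f : Y ⟶ Spec (CommRingCat.of k))
  [LocallyOfFiniteType f]

omit [IsAlgClosed k] [LocallyOfFiniteType f] in
lemma subsingleton_points : ∀ a b : (Spec (CommRingCat.of k) : AlgebraicGeometry.Scheme.{u}), a = b :=
  fun a b => Subsingleton.elim (α := PrimeSpectrum k) a b

/-- Any point of `Y` corresponding to a maximal ideal of the sections on an affine open is open,
given that the diagonal of `f` is an open map. -/
lemma isOpen_singleton_of_maximal (hf : IsOpenMap (pullback.diagonal f).base)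
    (V : Y.affineOpens) (p : PrimeSpectrum Γ(Y, V.1)) (hp : p.asIdeal.IsMaximal) :
    IsOpen ({V.2.fromSpec.base p} : Set Y) := by
  haveI := hp
  have e : V.1 ≤ f ⁻¹ᵁ ⊤ := fun a _ => trivial
  have hFT : RingHom.FiniteType (f.appLE ⊤ V.1 e).hom :=
    HasRingHomProperty.appLE (P := @LocallyOfFiniteType) f ‹_›
      ⟨⊤, isAffineOpen_top _⟩ V e
  letI : Field (Γ(Y, V.1) ⧸ p.asIdeal) := Ideal.Quotient.field p.asIdeal
  set ψ₀ : k →+* Γ(Y, V.1) :=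
    (f.appLE ⊤ V.1 e).hom.comp ((Scheme.ΓSpecIso (CommRingCat.of k)).inv.hom) with hψ₀def
  have hψ₀FT : ψ₀.FiniteType :=
    RingHom.FiniteType.comp hFT
      (RingHom.FiniteType.of_surjective _
        (Scheme.ΓSpecIso (CommRingCat.of k)).commRingCatIsoToRingEquiv.symm.surjective)
  set ψ : k →+* (Γ(Y, V.1) ⧸ p.asIdeal) := (Ideal.Quotient.mk p.asIdeal).comp ψ₀ with hψdef
  have hψFT : ψ.FiniteType :=
    RingHom.FiniteType.comp
      (RingHom.FiniteType.of_surjective _ Ideal.Quotient.mk_surjective) hψ₀FT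
  letI : Algebra k (Γ(Y, V.1) ⧸ p.asIdeal) := ψ.toAlgebra
  haveI : Algebra.FiniteType k (Γ(Y, V.1) ⧸ p.asIdeal) := hψFT
  haveI : Module.Finite k (Γ(Y, V.1) ⧸ p.asIdeal) := finite_of_finite_type_of_isJacobsonRing k _
  haveI : Algebra.IsIntegral k (Γ(Y, V.1) ⧸ p.asIdeal) := Algebra.IsIntegral.of_finite k _
  have hbij : Function.Bijective (algebraMap k (Γ(Y, V.1) ⧸ p.asIdeal)) :=
    ⟨(algebraMap k (Γ(Y, V.1) ⧸ p.asIdeal)).injective,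
      IsAlgClosed.algebraMap_bijective_of_isIntegral.2⟩
  set E : k ≃+* (Γ(Y, V.1) ⧸ p.asIdeal) := RingEquiv.ofBijective _ hbij with hEdef
  set χ : Γ(Y, V.1) →+* k := (E.symm : (Γ(Y, V.1) ⧸ p.asIdeal) →+* k).comp (Ideal.Quotient.mk p.asIdeal)
    with hχdef
  set σ : Spec (CommRingCat.of k) ⟶ Y :=
    Spec.map (CommRingCat.ofHom χ) ≫ V.2.fromSpec with hσdef
  have hσf : σ ≫ f = 𝟙 _ := by
    have h1 : Spec.map (f.appLE ⊤ V.1 e) ≫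
        (isAffineOpen_top (Spec (CommRingCat.of k))).fromSpec = V.2.fromSpec ≫ f :=
      IsAffineOpen.SpecMap_appLE_fromSpec f _ _ e
    have h2 : (f.appLE ⊤ V.1 e) ≫ CommRingCat.ofHom χ
        = (Scheme.ΓSpecIso (CommRingCat.of k)).hom := by
      ext x
      show χ ((f.appLE ⊤ V.1 e).hom x) = (Scheme.ΓSpecIso (CommRingCat.of k)).hom.hom x
      conv_lhs => rw [← Iso.hom_inv_id_apply (Scheme.ΓSpecIso (CommRingCat.of k)) x]
      exact E.symm_apply_apply ((Scheme.ΓSpecIso (CommRingCat.of k)).hom x)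
    rw [hσdef, Category.assoc, ← h1, ← Spec.map_comp_assoc, h2,
      IsAffineOpen.fromSpec_top, SpecMap_ΓSpecIso_hom]
    exact (Spec (CommRingCat.of k)).isoSpec.hom_inv_id
  have hpt := isOpen_singleton_of_section f σ hσf hf subsingleton_points
    (⊥ : PrimeSpectrum k)
  have hker : σ.base (⊥ : PrimeSpectrum k) = V.2.fromSpec.base p := by
    rw [hσdef]
    show V.2.fromSpec ((Spec.map (CommRingCat.ofHom χ)) (⊥ : PrimeSpectrum k)) = _
    congr 1
    show PrimeSpectrum.comap (χ : Γ(Y, V.1) →+* k) (⊥ : PrimeSpectrum k) = p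
    apply PrimeSpectrum.ext
    show Ideal.comap χ (⊥ : PrimeSpectrum k).asIdeal = p.asIdeal
    ext a
    have : χ a = 0 ↔ a ∈ p.asIdeal := by
      rw [hχdef]
      show E.symm (Ideal.Quotient.mk p.asIdeal a) = 0 ↔ _
      rw [map_eq_zero_iff _ E.symm.injective, Ideal.Quotient.eq_zero_iff_mem]
    simpa [Ideal.mem_comap] using this
  rw [← hker]
  exact hpt

/-- Given that the diagonal of `f` is an open map, every point of `Y` is open. -/
lemma isOpen_singleton_point (hf : IsOpenMap (pullback.diagonal f).base) (x : Y) :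
    IsOpen ({x} : Set Y) := by
  obtain ⟨V', hV'B, hxV', -⟩ :=
    TopologicalSpace.Opens.isBasis_iff_nbhd.mp Y.isBasis_affineOpens
      (U := ⊤) (x := x) trivial
  set V : Y.affineOpens := ⟨V', hV'B⟩
  have e : V.1 ≤ f ⁻¹ᵁ ⊤ := fun a _ => trivial
  have hFT : RingHom.FiniteType (f.appLE ⊤ V.1 e).hom :=
    HasRingHomProperty.appLE (P := @LocallyOfFiniteType) f ‹_›
      ⟨⊤, isAffineOpen_top _⟩ V e
  set A := Γ(Y, V.1)
  set ψ₀ : k →+* Γ(Y, V.1) :=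
    (f.appLE ⊤ V.1 e).hom.comp ((Scheme.ΓSpecIso (CommRingCat.of k)).inv.hom) with hψ₀def
  have hψ₀FT : ψ₀.FiniteType :=
    RingHom.FiniteType.comp hFT
      (RingHom.FiniteType.of_surjective _
        (Scheme.ΓSpecIso (CommRingCat.of k)).commRingCatIsoToRingEquiv.symm.surjective)
  haveI : IsJacobsonRing Γ(Y, V.1) := hψ₀FT.isJacobsonRing
  set p : PrimeSpectrum Γ(Y, V.1) := V.2.primeIdealOf ⟨x, hxV'⟩ with hpdef
  obtain ⟨ m, hm_mem, hm_closed⟩ :=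
    nonempty_inter_closedPoints (X := PrimeSpectrum Γ(Y, V.1))
      (Z := closure {p}) ⟨p, subset_closure rfl⟩ isClosed_closure.isLocallyClosed
  have hmmax : m.asIdeal.IsMaximal :=
    (PrimeSpectrum.isClosed_singleton_iff_isMaximal m).mp hm_closed
  have hopenY : IsOpen ({V.2.fromSpec.base m} : Set Y) :=
    isOpen_singleton_of_maximal f hf V m hmmax
  have hinj : Function.Injective V.2.fromSpec.base :=
    (V.2.fromSpec.isOpenEmbedding (H := V.2.isOpenImmersion_fromSpec)).injective
  have hopenm : IsOpen ({m} : Set (PrimeSpectrum Γ(Y, V.1))) := by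
    have hpre : (V.2.fromSpec.base) ⁻¹' {V.2.fromSpec.base m} = {m} := by
      ext z
      simp only [Set.mem_preimage, Set.mem_singleton_iff]
      exact ⟨fun h => hinj h, fun h => by rw [h]⟩
    have := (Scheme.Hom.continuous V.2.fromSpec).isOpen_preimage _ hopenY
    rw [hpre] at this
    exact this
  have hpm : p = m := by
    rcases mem_closure_iff.mp hm_mem _ hopenm rfl with ⟨q, hq1, hq2⟩
    rw [Set.mem_singleton_iff] at hq1 hq2
    exact hq2 ▸ hq1
  have himg : IsOpen (V.2.fromSpec.base '' ({p} : Set (PrimeSpectrum Γ(Y, V.1)))) :=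
    (V.2.fromSpec.isOpenEmbedding (H := V.2.isOpenImmersion_fromSpec)).isOpenMap _ (hpm ▸ hopenm)
  have hx : V.2.fromSpec p = x := V.2.fromSpec_primeIdealOf ⟨x, hxV'⟩
  erw [Set.image_singleton] at himg
  rwa [hx] at himg

end TopUnramifiedAux

end Aux

/-- Let `k` be an algebraically closed field and `Y` a reduced scheme of finite
type over `k`.  If the structure morphism `f : Y ⟶ Spec k` is topologically unramified, then it
is étale. -/
theorem isEtale_of_topologicallyUnramified_of_reduced
    (k : Type u) [Field k] [IsAlgClosed k]
    (Y : AlgebraicGeometry.Scheme.{u}) [IsReduced Y]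
    (f : Y ⟶ Spec (CommRingCat.of k)) [QuasiCompact f] [LocallyOfFiniteType f]
    (hf : TopologicallyUnramified f) :
    IsEtale f := by
  have hf' : IsOpenMap (pullback.diagonal f).base := hf
  have hQ : RingHom.StableUnderCompositionWithLocalizationAwaySource RingHom.Etale :=
    fun R S T _ _ _ _ r _ g hg => RingHom.Etale.stableUnderComposition _ _
      (RingHom.etale_algebraMap.mpr (Algebra.Etale.of_isLocalizationAway r)) hg
  refine (HasRingHomProperty.iff_exists_appLE (P := @Etale) hQ).mpr (fun x => ?_)
  have hxopen : IsOpen ({x} : Set Y) :=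
    TopUnramifiedAux.isOpen_singleton_point f hf' x
  obtain ⟨V, hVB, hxV, hVsub⟩ :=
    TopologicalSpace.Opens.isBasis_iff_nbhd.mp Y.isBasis_affineOpens
      (U := ⟨{x}, hxopen⟩) (x := x) rfl
  have hVaff : IsAffineOpen V := hVB
  have hVeq : (V : Set Y) = {x} :=
    le_antisymm hVsub (Set.singleton_subset_iff.mpr hxV)
  have hinj : Function.Injective hVaff.fromSpec.base :=
    hVaff.fromSpec.isOpenEmbedding.injective
  haveI hsub : Subsingleton (PrimeSpectrum Γ(Y, V)) := by
    constructor
    intro s t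
    apply hinj
    have hs : hVaff.fromSpec.base s ∈ (V : Set Y) := by
      rw [← hVaff.range_fromSpec]; exact ⟨s, rfl⟩
    have ht : hVaff.fromSpec.base t ∈ (V : Set Y) := by
      rw [← hVaff.range_fromSpec]; exact ⟨t, rfl⟩
    rw [hVeq, Set.mem_singleton_iff] at hs ht
    rw [hs, ht]
  haveI : Nontrivial Γ(Y, V) := by
    by_contra h
    rw [not_nontrivial_iff_subsingleton] at h
    exact (inferInstance : IsEmpty (PrimeSpectrum Γ(Y, V))).false (hVaff.primeIdealOf ⟨x, hxV⟩)
  have hfield : IsField Γ(Y, V) := by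
    by_contra hnf
    obtain ⟨q, hq0, hq⟩ := Ring.not_isField_iff_exists_prime.mp hnf
    have hset : ({J : Ideal Γ(Y, V) | J.IsPrime} : Set (Ideal Γ(Y, V))) = {q} := by
      ext J
      constructor
      · intro hJ
        have := Subsingleton.elim (⟨J, hJ⟩ : PrimeSpectrum Γ(Y, V)) ⟨q, hq⟩
        exact congrArg PrimeSpectrum.asIdeal this
      · rintro rfl; exact hq
    have hnil : nilradical Γ(Y, V) = ⊥ := nilradical_eq_zero Γ(Y, V)
    rw [nilradical_eq_sInf, hset, sInf_singleton] at hnil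
    exact hq0 hnil
  letI : Field Γ(Y, V) := hfield.toField
  have e : V ≤ f ⁻¹ᵁ ⊤ := fun a _ => trivial
  have hFT : RingHom.FiniteType (f.appLE ⊤ V e).hom :=
    HasRingHomProperty.appLE (P := @LocallyOfFiniteType) f ‹_›
      ⟨⊤, isAffineOpen_top _⟩ ⟨V, hVaff⟩ e
  set ψ₀ : k →+* Γ(Y, V) :=
    (f.appLE ⊤ V e).hom.comp ((Scheme.ΓSpecIso (CommRingCat.of k)).inv.hom) with hψ₀def
  have hψ₀FT : ψ₀.FiniteType :=
    RingHom.FiniteType.comp hFT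
      (RingHom.FiniteType.of_surjective _
        (Scheme.ΓSpecIso (CommRingCat.of k)).commRingCatIsoToRingEquiv.symm.surjective)
  letI : Algebra k Γ(Y, V) := ψ₀.toAlgebra
  haveI : Algebra.FiniteType k Γ(Y, V) := hψ₀FT
  haveI : Module.Finite k Γ(Y, V) := finite_of_finite_type_of_isJacobsonRing k Γ(Y, V)
  haveI : Algebra.IsIntegral k Γ(Y, V) := Algebra.IsIntegral.of_finite k Γ(Y, V)
  have hbij : Function.Bijective (algebraMap k Γ(Y, V)) :=
    ⟨(algebraMap k Γ(Y, V)).injective, IsAlgClosed.algebraMap_bijective_of_isIntegral.2⟩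
  refine ⟨⟨⊤, isAffineOpen_top _⟩, ⟨V, hVaff⟩, hxV, e, ?_⟩
  set E : Γ(Spec (CommRingCat.of k), ⊤) ≃+* Γ(Y, V) :=
    (Scheme.ΓSpecIso (CommRingCat.of k)).commRingCatIsoToRingEquiv.trans
      (RingEquiv.ofBijective _ hbij) with hEdef
  have hEeq : (f.appLE ⊤ V e).hom = (E : Γ(Spec (CommRingCat.of k), ⊤) →+* Γ(Y, V)) := by
    ext a
    show (f.appLE ⊤ V e).hom a
      = ψ₀ ((Scheme.ΓSpecIso (CommRingCat.of k)).hom.hom a)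
    show (f.appLE ⊤ V e).hom a
      = (f.appLE ⊤ V e).hom
          ((Scheme.ΓSpecIso (CommRingCat.of k)).inv.hom
            ((Scheme.ΓSpecIso (CommRingCat.of k)).hom.hom a))
    exact (congrArg (f.appLE ⊤ V e).hom
      ((Scheme.ΓSpecIso (CommRingCat.of k)).commRingCatIsoToRingEquiv.symm_apply_apply a)).symm
  show (f.appLE ⊤ V e).hom.Etale
  rw [hEeq]
  exact RingHom.Etale.of_bijective E.bijective
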